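/- Let r be a divisor of q^n - 1, let η be a multiplicative character of F_{q^n} and ψ a non-trivial additive character of F_{q^n}. Then |Σ_{α ∈ F_{q^n}^*} η(α) ψ(α^r)| ≤ r · q^{n/2}. -/

import Mathlib

open Finset

private lemma sum_units_eq {F : Type*} [Field F] [Fintype F] [DecidableEq F]
    (f : F → ℂ) (hf : f 0 = 0) : ∑ u : Fˣ, f ↑u = ∑ a : F, f a := by
  rw [← Finset.sum_erase (Finset.univ : Finset F) hf]
  refine Finset.sum_bij (fun (u : Fˣ) _ => (u : F)) ?_ ?_ ?_ ?_
  · intro u _; exact Finset.mem_erase.mpr ⟨u.ne_zero, Finset.mem_univ _⟩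
  · intro u _ v _ h; exact Units.ext h
  · intro a ha
    obtain ⟨ha0, -⟩ := Finset.mem_erase.mp ha
    exact ⟨Units.mk0 a ha0, Finset.mem_univ _, rfl⟩
  · intros; rfl

private lemma gauss_abs_le {F : Type*} [Field F] [Fintype F] [DecidableEq F]
    {ψ : AddChar F ℂ} (hψ : ψ ≠ 1) (θ : MulChar F ℂ) :
    ‖gaussSum θ ψ‖ ≤ Real.sqrt (Fintype.card F) := by
  rcases eq_or_ne θ 1 with h1 | h1
  · subst h1
    have h0 : gaussSum (1 : MulChar F ℂ) ψ = ∑ u : Fˣ, ψ ↑u := by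
      rw [gaussSum, ← sum_units_eq (fun a => (1 : MulChar F ℂ) a * ψ a)
        (by simp only [MulChar.map_zero, zero_mul])]
      exact Finset.sum_congr rfl fun u _ => by rw [MulChar.one_apply_coe, one_mul]
    have h2 : ∑ u : Fˣ, ψ ↑u = -1 := by
      have e1 := sum_units_eq (F := F) (fun a => if a = 0 then 0 else ψ a) (by simp)
      have e2 : ∑ u : Fˣ, (if (u : F) = 0 then (0 : ℂ) else ψ ↑u) = ∑ u : Fˣ, ψ ↑u :=
        Finset.sum_congr rfl fun u _ => by rw [if_neg u.ne_zero]
      have e3 : ∑ a : F, (if a = 0 then (0 : ℂ) else ψ a) = (∑ a : F, ψ a) - 1 := by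
        have h4 : ∀ a : F, (if a = 0 then (0 : ℂ) else ψ a)
            = ψ a - (if a = 0 then 1 else 0) := by
          intro a
          split
          · subst ‹a = 0›; simp [AddChar.map_zero_eq_one]
          · simp
        rw [Finset.sum_congr rfl fun a _ => h4 a, Finset.sum_sub_distrib,
          Finset.sum_ite_eq' Finset.univ (0 : F) (fun _ => (1 : ℂ))]
        simp
      rw [← e2, e1, e3, AddChar.sum_eq_zero_of_ne_one hψ, zero_sub]
    rw [h0, h2]
    have : (1 : ℝ) ≤ Real.sqrt (Fintype.card F) := by
      rw [show (1 : ℝ) = Real.sqrt 1 from (Real.sqrt_one).symm]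
      exact Real.sqrt_le_sqrt (by exact_mod_cast Fintype.card_pos)
    simpa using this
  · have hp : ψ.IsPrimitive := AddChar.IsPrimitive.of_ne_one hψ
    have hmul := gaussSum_mul_gaussSum_eq_card h1 hp
    have hconj : gaussSum θ⁻¹ ψ⁻¹ = (starRingEnd ℂ) (gaussSum θ ψ) := by
      rw [gaussSum, gaussSum, map_sum]
      refine Finset.sum_congr rfl fun a _ => ?_
      rw [map_mul]
      congr 1
      · rw [← MulChar.star_apply' θ a, starRingEnd_apply]
      · rw [AddChar.inv_apply']
        refine RCLike.inv_eq_conj ?_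
        refine Complex.norm_eq_one_of_pow_eq_one (n := Fintype.card F) ?_
          Fintype.card_ne_zero
        rw [← AddChar.map_nsmul_eq_pow, nsmul_eq_mul, FiniteField.cast_card_eq_zero F, zero_mul,
          AddChar.map_zero_eq_one]
    rw [hconj] at hmul
    have habs : ‖gaussSum θ ψ‖ * ‖gaussSum θ ψ‖
        = (Fintype.card F : ℝ) := by
      have := congrArg (‖·‖) hmul
      rwa [norm_mul, Complex.norm_conj, Complex.norm_natCast] at this
    refine le_of_eq ?_
    calc ‖gaussSum θ ψ‖
        = Real.sqrt (‖gaussSum θ ψ‖ * ‖gaussSum θ ψ‖) :=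
          (Real.sqrt_mul_self (norm_nonneg _)).symm
      _ = Real.sqrt (Fintype.card F) := by rw [habs]

theorem stmt8 (q n r : ℕ) (hq : 1 < q) (hn : 0 < n)
    (F : Type*) [Field F] [Fintype F] [DecidableEq F] (hF : Fintype.card F = q ^ n)
    (hr : r ∣ q ^ n - 1)
    (η : MulChar F ℂ) (ψ : AddChar F ℂ) (hψ : ψ ≠ 1) :
    ‖∑ α : Fˣ, η (α : F) * ψ ((α : F) ^ r)‖
      ≤ (r : ℝ) * (q : ℝ) ^ ((n : ℝ) / 2) := by
  classical
  have hcard_units : Fintype.card Fˣ = q ^ n - 1 := by rw [Fintype.card_units, hF]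
  have hqn : 1 < q ^ n := Nat.one_lt_pow hn.ne' hq
  have hN0 : 0 < q ^ n - 1 := Nat.sub_pos_of_lt hqn
  have hr0 : 0 < r := by
    rcases Nat.eq_zero_or_pos r with h | h
    · subst h; rw [Nat.zero_dvd] at hr; omega
    · exact h
  have hpow : Real.sqrt (Fintype.card F) = (q : ℝ) ^ ((n : ℝ) / 2) := by
    rw [hF]
    push_cast
    rw [Real.sqrt_eq_rpow, ← Real.rpow_natCast (q : ℝ) n,
      ← Real.rpow_mul (by positivity)]
    congr 1
    ring
  by_cases hA : ∀ ζ : Fˣ, ζ ^ r = 1 → η ↑ζ = 1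
  swap
  · -- the sum vanishes
    push_neg at hA
    obtain ⟨ζ, hz1, hz2⟩ := hA
    set S := ∑ α : Fˣ, η (α : F) * ψ ((α : F) ^ r) with hS
    have key : S = η ↑ζ * S := by
      calc S = ∑ α : Fˣ, η ((ζ * α : Fˣ) : F) * ψ (((ζ * α : Fˣ) : F) ^ r) := by
            rw [hS]
            exact (Equiv.sum_comp (Equiv.mulLeft ζ)
              (fun α : Fˣ => η (α : F) * ψ ((α : F) ^ r))).symm
        _ = ∑ α : Fˣ, η ↑ζ * (η (α : F) * ψ ((α : F) ^ r)) := by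
            refine Finset.sum_congr rfl fun α _ => ?_
            have h2 : ((ζ * α : Fˣ) : F) ^ r = ((α : F)) ^ r := by
              rw [Units.val_mul, mul_pow, ← Units.val_pow_eq_pow_val, hz1,
                Units.val_one, one_mul]
            rw [h2, Units.val_mul, map_mul]
            ring
        _ = η ↑ζ * S := by rw [hS, Finset.mul_sum]
    have hS0 : S = 0 := by
      have h0 : (η ↑ζ - 1) * S = 0 := by
        rw [sub_mul, one_mul, ← key, sub_self]
      rcases mul_eq_zero.mp h0 with h | h
      · exact absurd (sub_eq_zero.mp h) hz2
      · exact h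
    rw [hS0, norm_zero]
    positivity
  · -- main case: η is trivial on r-th roots of unity
    obtain ⟨g, hg⟩ := IsCyclic.exists_generator (α := Fˣ)
    have hord : orderOf g = q ^ n - 1 := by
      rw [orderOf_eq_card_of_forall_mem_zpowers hg, Nat.card_eq_fintype_card, hcard_units]
    set m : ℕ := (q ^ n - 1) / r with hm_def
    have hm : r * m = q ^ n - 1 := Nat.mul_div_cancel' hr
    have hm0 : 0 < m := by
      rcases Nat.eq_zero_or_pos m with h | h
      · rw [h, mul_zero] at hm; omega
      · exact h
    -- construct χ with χ ^ r = η
    obtain ⟨z, hz⟩ := IsAlgClosed.exists_pow_nat_eq (k := ℂ) (η ↑g) hr0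
    have hgne : η (↑g : F) ≠ 0 := (g.isUnit.map η).ne_zero
    have hz0 : z ≠ 0 := fun h => hgne (by rw [← hz, h, zero_pow hr0.ne'])
    set ξ : ℂˣ := Units.mk0 z hz0 with hξdef
    have hξN : ξ ^ (q ^ n - 1) = 1 := by
      have h1 : η ((g ^ m : Fˣ) : F) = 1 := by
        refine hA _ ?_
        rw [← pow_mul, mul_comm, hm, ← hord, pow_orderOf_eq_one]
      ext
      rw [Units.val_pow_eq_pow_val, Units.val_one]
      calc (ξ : ℂ) ^ (q ^ n - 1) = ((ξ : ℂ) ^ r) ^ m := by rw [← pow_mul, hm]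
        _ = η ((g ^ m : Fˣ) : F) := by
            rw [show ((ξ : ℂ)) = z from rfl, hz, Units.val_pow_eq_pow_val, map_pow]
        _ = 1 := h1
    have hdvd : orderOf ξ ∣ orderOf g := by
      rw [hord]; exact orderOf_dvd_of_pow_eq_one hξN
    set χ : MulChar F ℂ := MulChar.ofUnitHom (monoidHomOfForallMemZpowers hg hdvd)
      with hχdef
    have hχg : χ ↑g = z := by
      rw [hχdef, MulChar.ofUnitHom_coe, monoidHomOfForallMemZpowers_apply_gen]; rfl
    have hχr : χ ^ r = η := by
      rw [MulChar.eq_iff hg, MulChar.pow_apply_coe, hχg, hz]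
    -- construct the character λ of order r
    set ζc : ℂ := Complex.exp (2 * Real.pi * Complex.I / r) with hζcdef
    have hζ : IsPrimitiveRoot ζc r := Complex.isPrimitiveRoot_exp r hr0.ne'
    set ζu : ℂˣ := (hζ.isUnit hr0.ne').unit with hζudef
    have hζuval : (ζu : ℂ) = ζc := IsUnit.unit_spec _
    have hζmem : ζu ∈ rootsOfUnity (Fintype.card Fˣ) ℂ := by
      rw [mem_rootsOfUnity]
      have hr1 : ζu ^ r = 1 := by
        ext; rw [Units.val_pow_eq_pow_val, hζuval, hζ.pow_eq_one, Units.val_one]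
      rw [hcard_units, ← hm, pow_mul, hr1, one_pow]
    set lam : MulChar F ℂ := MulChar.ofRootOfUnity hζmem hg with hlamdef
    have hlg : lam ↑g = ζc := by
      rw [hlamdef]
      have := MulChar.ofRootOfUnity_spec hζmem hg
      rw [this, hζuval]
    have hlr : lam ^ r = 1 := by
      rw [MulChar.eq_iff hg, MulChar.pow_apply_coe, hlg, MulChar.one_apply_coe,
        hζ.pow_eq_one]
    have hlupow : ∀ u : Fˣ, lam ↑u ^ r = 1 := by
      intro u
      rw [← MulChar.pow_apply_coe, hlr, MulChar.one_apply_coe]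
    -- counting lemma
    have hcount : ∀ u : Fˣ,
        ((Finset.univ.filter fun α : Fˣ => α ^ r = u).card : ℂ)
          = ∑ j ∈ Finset.range r, lam ↑u ^ j := by
      intro u
      by_cases hu : ∃ α₀ : Fˣ, α₀ ^ r = u
      · obtain ⟨α₀, rfl⟩ := hu
        have hl1 : lam ↑(α₀ ^ r) = 1 := by
          rw [Units.val_pow_eq_pow_val, map_pow, hlupow]
        rw [hl1]
        simp only [one_pow, Finset.sum_const, Finset.card_range, nsmul_eq_mul, mul_one]
        norm_cast
        have hbij : (Finset.univ.filter fun α : Fˣ => α ^ r = α₀ ^ r).card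
            = (Finset.univ.filter fun δ : Fˣ => δ ^ r = 1).card := by
          apply Finset.card_bij (fun α _ => α₀⁻¹ * α)
          · intro α hα
            simp only [Finset.mem_filter, Finset.mem_univ, true_and] at hα ⊢
            rw [mul_pow, hα, inv_pow, inv_mul_cancel]
          · intro a _ b _ h
            exact mul_left_cancel h
          · intro δ hδ
            refine ⟨α₀ * δ, ?_, by rw [← mul_assoc, inv_mul_cancel, one_mul]⟩
            simp only [Finset.mem_filter, Finset.mem_univ, true_and] at hδ ⊢
            rw [mul_pow, hδ, mul_one]
        -- count the r-th roots of unity in F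
        haveI : NeZero r := ⟨hr0.ne'⟩
        have homega : orderOf (g ^ m) = r := by
          rw [orderOf_pow, hord, ← hm, Nat.gcd_eq_right (dvd_mul_left m r),
            Nat.mul_div_cancel r hm0]
        have hω : IsPrimitiveRoot ((g ^ m : Fˣ) : F) r := by
          rw [← homega]
          exact (IsPrimitiveRoot.coe_units_iff).mpr (IsPrimitiveRoot.orderOf _)
        have hcardr := hω.card_rootsOfUnity
        have hcard2 : Fintype.card (rootsOfUnity r F)
            = (Finset.univ.filter fun δ : Fˣ => δ ^ r = 1).card := by
          rw [Fintype.card_congr (Equiv.subtypeEquivRight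
            (fun δ : Fˣ => mem_rootsOfUnity r δ))]
          exact Fintype.card_subtype _
        rw [hbij, ← hcard2, ← Nat.card_eq_fintype_card, hcardr]
      · have hfil : (Finset.univ.filter fun α : Fˣ => α ^ r = u) = ∅ := by
          rw [Finset.filter_eq_empty_iff]
          exact fun α _ h => hu ⟨α, h⟩
        have hlune : lam ↑u ≠ 1 := by
          intro hl
          apply hu
          obtain ⟨k, hk⟩ := Subgroup.mem_zpowers_iff.mp (hg u)
          have hval : (MulChar.toUnitHom lam) u = 1 := by
            ext
            rw [MulChar.coe_toUnitHom, hl, Units.val_one]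
          have horder : orderOf (MulChar.toUnitHom lam g) = r := by
            rw [← orderOf_units, MulChar.coe_toUnitHom, hlg, ← hζ.eq_orderOf]
          rw [← hk, map_zpow] at hval
          have hdvdk : ((r : ℕ) : ℤ) ∣ k := by
            rw [← horder]
            exact orderOf_dvd_iff_zpow_eq_one.mpr hval
          obtain ⟨w, rfl⟩ := hdvdk
          exact ⟨g ^ w, by rw [← hk, ← zpow_natCast, ← zpow_mul, mul_comm]⟩
        rw [hfil, Finset.card_empty, geom_sum_eq hlune, hlupow, sub_self, zero_div]
        simp
    -- main computation
    have main : ∑ α : Fˣ, η (α : F) * ψ ((α : F) ^ r)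
        = ∑ j ∈ Finset.range r, gaussSum (χ * lam ^ j) ψ := by
      calc ∑ α : Fˣ, η (α : F) * ψ ((α : F) ^ r)
          = ∑ α : Fˣ, (fun u : Fˣ => χ ↑u * ψ ↑u) (α ^ r) := by
            refine Finset.sum_congr rfl fun α _ => ?_
            simp only
            rw [Units.val_pow_eq_pow_val, map_pow χ, ← MulChar.pow_apply_coe, hχr]
        _ = ∑ α : Fˣ, ∑ u : Fˣ, if α ^ r = u then χ ↑u * ψ ↑u else 0 := by
            refine Finset.sum_congr rfl fun α _ => ?_
            rw [Finset.sum_ite_eq Finset.univ (α ^ r) (fun u : Fˣ => χ ↑u * ψ ↑u)]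
            simp
        _ = ∑ u : Fˣ, ∑ α : Fˣ, if α ^ r = u then χ ↑u * ψ ↑u else 0 :=
            Finset.sum_comm
        _ = ∑ u : Fˣ, ((Finset.univ.filter fun α : Fˣ => α ^ r = u).card : ℂ)
              * (χ ↑u * ψ ↑u) := by
            refine Finset.sum_congr rfl fun u _ => ?_
            rw [← Finset.sum_filter, Finset.sum_const, nsmul_eq_mul]
        _ = ∑ u : Fˣ, ∑ j ∈ Finset.range r, (χ * lam ^ j) ↑u * ψ ↑u := by
            refine Finset.sum_congr rfl fun u _ => ?_
            rw [hcount u, Finset.sum_mul]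
            refine Finset.sum_congr rfl fun j _ => ?_
            rw [MulChar.mul_apply, MulChar.pow_apply_coe]
            ring
        _ = ∑ j ∈ Finset.range r, ∑ u : Fˣ, (χ * lam ^ j) ↑u * ψ ↑u :=
            Finset.sum_comm
        _ = ∑ j ∈ Finset.range r, gaussSum (χ * lam ^ j) ψ := by
            refine Finset.sum_congr rfl fun j _ => ?_
            rw [gaussSum, ← sum_units_eq (fun a => (χ * lam ^ j) a * ψ a)
              (by simp only [MulChar.map_zero, zero_mul])]
    rw [main]
    calc ‖∑ j ∈ Finset.range r, gaussSum (χ * lam ^ j) ψ‖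
        ≤ ∑ j ∈ Finset.range r, ‖gaussSum (χ * lam ^ j) ψ‖ :=
          norm_sum_le _ _
      _ ≤ ∑ j ∈ Finset.range r, Real.sqrt (Fintype.card F) :=
          Finset.sum_le_sum fun j _ => gauss_abs_le hψ _
      _ = r * Real.sqrt (Fintype.card F) := by
          rw [Finset.sum_const, Finset.card_range, nsmul_eq_mul]
      _ = r * (q : ℝ) ^ ((n : ℝ) / 2) := by rw [hpow]
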